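/- There exists a state ρ_ZAA' (two classical bits Z, and qubit registers A, A' jointly in the Bell state determined by Z) and a game in which a player with access to both A and A' can guess Z with probability 1, whereas any measurement on A' alone guesses Z with probability at most 1/4. Hence the conditional max-accessible-information I_max^acc(Z;A|A') is not bounded by H_0(A) = 1 in general. -/

import Mathlib

open scoped Kronecker ComplexOrder
open Matrix

noncomputable section

/-- Partial trace over the first (A) register. -/
def ptraceFst {α β : Type*} [Fintype α] (ρ : Matrix (α × β) (α × β) ℂ) : Matrix β β ℂ :=
  fun i j => ∑ a, ρ (a, i) (a, j)

/-- The Bell state `|β_{z₁ z₂}⟩ = (|0, z₂⟩ + (-1)^{z₁} |1, 1 ⊕ z₂⟩)/√2` on registers `A × A'`. -/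
def bellVec (z : Fin 2 × Fin 2) : Fin 2 × Fin 2 → ℂ :=
  fun ab => if ab.2 = ab.1 + z.2 then ((-1 : ℂ) ^ ((z.1 : ℕ) * (ab.1 : ℕ))) / (Real.sqrt 2 : ℂ)
            else 0

/-- The projector `|β_z⟩⟨β_z|`. -/
def bellProj (z : Fin 2 × Fin 2) : Matrix (Fin 2 × Fin 2) (Fin 2 × Fin 2) ℂ :=
  Matrix.vecMulVec (bellVec z) (star (bellVec z))

lemma s2 : (Real.sqrt 2 : ℂ) * (Real.sqrt 2 : ℂ) = 2 := by
  norm_cast; exact Real.mul_self_sqrt (by norm_num)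

lemma s2p : (Real.sqrt 2 : ℂ)^2 = 2 := by rw [sq, s2]

lemma s4 : (Real.sqrt 2 : ℂ)^4 = 4 := by
  have : (4:ℕ) = 2*2 := rfl
  rw [this, pow_mul, s2p]; norm_num

lemma bell_psd (z : Fin 2 × Fin 2) : (bellProj z).PosSemidef := by
  have h : bellProj z = replicateCol (Fin 1) (bellVec z) * (replicateCol (Fin 1) (bellVec z))ᴴ := by
    rw [conjTranspose_replicateCol]; exact vecMulVec_eq (ι := Fin 1) (bellVec z) (star (bellVec z))
  rw [h]
  exact Matrix.posSemidef_self_mul_conjTranspose _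

lemma bell_ptrace (z : Fin 2 × Fin 2) : ptraceFst (bellProj z) = (1/2 : ℂ) • 1 := by
  ext i j
  fin_cases z <;> fin_cases i <;> fin_cases j <;>
    simp [ptraceFst, bellProj, bellVec, vecMulVec, Fin.sum_univ_two, Matrix.one_apply,
      Complex.star_def, map_div₀, Complex.conj_ofReal, Fin.ext_iff] <;>
    field_simp <;> ring_nf <;> rw [sq, s2]

set_option maxHeartbeats 1000000 in
lemma bell_sum : ∑ z, bellProj z = 1 := by
  ext ab cd
  rw [Matrix.sum_apply, Fintype.sum_prod_type]
  simp only [Fin.sum_univ_two]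
  fin_cases ab <;> fin_cases cd <;>
    simp [bellProj, bellVec, vecMulVec, Matrix.one_apply, Prod.ext_iff,
      Complex.star_def, map_div₀, Complex.conj_ofReal, Fin.ext_iff]
  all_goals try field_simp
  all_goals try ring_nf
  all_goals simp [s2p, s4]

set_option maxHeartbeats 1000000 in
lemma bell_trace (z : Fin 2 × Fin 2) : (bellProj z * bellProj z).trace = 1 := by
  fin_cases z <;>
    simp [Matrix.trace, Matrix.mul_apply, Matrix.diag, Fintype.sum_prod_type,
      bellProj, bellVec, vecMulVec, Fin.sum_univ_two,
      Complex.star_def, map_div₀, Complex.conj_ofReal, Fin.ext_iff] <;>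
    field_simp <;> ring_nf <;> simp [s2p, s4]

/-- For `ρ_ZAA' = (1/4) Σ_z |z⟩⟨z| ⊗ |Bell_z⟩⟨Bell_z|`: a player measuring both `A` and `A'`
can guess the two classical bits `Z` with probability 1 (Bell measurement), while any POVM on
`A'` alone guesses `Z` with probability at most `1/4`.  Hence `I_max^acc(Z;A|A')` is not
bounded by `H₀(A) = 1`. -/
theorem stmt6 :
    (∃ F : (Fin 2 × Fin 2) → Matrix (Fin 2 × Fin 2) (Fin 2 × Fin 2) ℂ,
       (∀ z, (F z).PosSemidef) ∧ ∑ z, F z = 1 ∧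
       ∑ z, (1 / 4 : ℝ) * ((F z * bellProj z).trace.re) = 1)
    ∧ ∀ G : (Fin 2 × Fin 2) → Matrix (Fin 2) (Fin 2) ℂ,
       (∀ z, (G z).PosSemidef) → ∑ z, G z = 1 →
       ∑ z, (1 / 4 : ℝ) * ((G z * ptraceFst (bellProj z)).trace.re) ≤ 1 / 4 := by

  constructor
  · refine ⟨bellProj, bell_psd, bell_sum, ?_⟩
    simp only [bell_trace]
    norm_num [Fintype.sum_prod_type, Fin.sum_univ_two]
  · intro G hG hsum
    have key : ∀ z, (G z * ptraceFst (bellProj z)).trace = (1/2 : ℂ) * (G z).trace := by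
      intro z
      rw [bell_ptrace, Matrix.mul_smul, mul_one, Matrix.trace_smul, smul_eq_mul]
    have h : ∑ z, (1 / 4 : ℝ) * ((G z * ptraceFst (bellProj z)).trace.re)
        = (1/8 : ℝ) * ((∑ z, G z).trace.re) := by
      rw [Matrix.trace_sum, Complex.re_sum, Finset.mul_sum]
      refine Finset.sum_congr rfl fun z _ => ?_
      rw [key z]
      simp [Complex.mul_re]
      ring
    rw [h, hsum]
    norm_num [Matrix.trace_one]
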